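/- Let X be a compact metric space, Q continuous, X Q-amenable. Then for every non-empty open ball B, inf_{x∈B} Q(x) ≤ dim_H(B) ≤ sup_{x∈B} Q(x). -/

import Mathlib

open Set MeasureTheory ENNReal

/-- The spherical Carathéodory measure `λ^{Q_c}` with weight `|B_r(x)|^{Q(x)}` on open
balls (weight `∞` for sets that are not open balls, realized as an infimum over ball
representations). -/
noncomputable def lambdaQc (X : Type*) [MetricSpace X] [MeasurableSpace X] [BorelSpace X]
    (Q : X → ℝ) : Measure X :=
  Measure.mkMetric'
    (fun U => ⨅ (x : X) (r : ℝ≥0∞) (_ : U = EMetric.ball x r), EMetric.diam U ^ Q x)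

section Aux

variable {X : Type*} [MetricSpace X]

/-- The gauge used in `lambdaQc`. -/
noncomputable def gaugeQ (Q : X → ℝ) : Set X → ℝ≥0∞ :=
  fun U => ⨅ (x : X) (r : ℝ≥0∞) (_ : U = EMetric.ball x r), EMetric.diam U ^ Q x

lemma aux_mkMetric'_apply (m : Set X → ℝ≥0∞) (s : Set X) :
    OuterMeasure.mkMetric' m s
      = ⨆ (r : ℝ≥0∞) (_ : 0 < r), OuterMeasure.mkMetric'.pre m r s := by
  rw [OuterMeasure.mkMetric', OuterMeasure.iSup_apply]
  exact iSup_congr fun r => OuterMeasure.iSup_apply _ _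

lemma aux_add_rpow_le {a b : ℝ≥0∞} {q : ℝ} (hq : 0 ≤ q) :
    (a + b) ^ q ≤ (2 * a) ^ q + (2 * b) ^ q := by
  rcases le_total a b with h | h
  · calc (a + b) ^ q ≤ (2 * b) ^ q :=
        ENNReal.rpow_le_rpow (by rw [two_mul]; exact add_le_add_left h b) hq
      _ ≤ _ := le_add_self
  · calc (a + b) ^ q ≤ (2 * a) ^ q :=
        ENNReal.rpow_le_rpow (by rw [two_mul]; exact add_le_add_right h a) hq
      _ ≤ _ := le_self_add

variable [MeasurableSpace X] [BorelSpace X]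

lemma lambdaQc_apply_eq_outer (Q : X → ℝ) {s : Set X} (hs : MeasurableSet s) :
    lambdaQc X Q s = OuterMeasure.mkMetric' (gaugeQ Q) s :=
  MeasureTheory.toMeasure_apply _ (OuterMeasure.mkMetric'_isMetric _).le_caratheodory hs

/-- Upper bound: if `Q` is at most `d` near `B`, then `μH[d] B ≤ λ B`. -/
lemma hausdorff_le_lambdaQc (Q : X → ℝ) {B : Set X} (hB : MeasurableSet B) {d δ : ℝ}
    (hδ : 0 < δ) (hQd : ∀ c y : X, y ∈ B → dist c y < δ → Q c ≤ d) :
    μH[d] B ≤ lambdaQc X Q B := by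
  classical
  rw [lambdaQc_apply_eq_outer Q hB]
  have hδ0' : ENNReal.ofReal δ ≠ 0 := (ENNReal.ofReal_pos.2 hδ).ne'
  set ε₀ : ℝ≥0∞ := min 1 (ENNReal.ofReal δ / 2) with hε₀def
  have hε₀0 : 0 < ε₀ := lt_min zero_lt_one (ENNReal.div_pos hδ0' (by norm_num))
  have hε₀1 : ε₀ ≤ 1 := min_le_left _ _
  have hε₀δ : ε₀ < ENNReal.ofReal δ :=
    (min_le_right _ _).trans_lt (ENNReal.half_lt_self hδ0' ENNReal.ofReal_ne_top)
  have key : ∀ ε : ℝ≥0∞, ε ≤ ε₀ →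
      OuterMeasure.mkMetric'.pre (fun s => EMetric.diam s ^ d) ε B
        ≤ OuterMeasure.mkMetric'.pre (gaugeQ Q) ε B := by
    intro ε hε
    simp only [OuterMeasure.mkMetric'.pre, OuterMeasure.boundedBy_apply]
    refine le_iInf fun t => le_iInf fun ht => ?_
    set t' : ℕ → Set X := fun n => if (t n ∩ B).Nonempty then t n else ∅ with ht'def
    have hcov : B ⊆ ⋃ n, t' n := by
      intro z hz
      rcases mem_iUnion.1 (ht hz) with ⟨n, hn⟩
      have hm' : (t n ∩ B).Nonempty := ⟨z, hn, hz⟩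
      refine mem_iUnion.2 ⟨n, ?_⟩
      simp only [t', if_pos hm']
      exact hn
    refine le_trans (iInf₂_le t' hcov) (ENNReal.tsum_le_tsum fun n => ?_)
    by_cases hmeet : (t n ∩ B).Nonempty
    · obtain ⟨y, hyt, hyB⟩ := id hmeet
      have htn : (t n).Nonempty := ⟨y, hyt⟩
      simp only [t', if_pos hmeet, iSup_pos htn, extend]
      refine le_iInf fun hdiam => le_trans (iInf_le _ hdiam) ?_
      refine le_iInf fun c => le_iInf fun ρ => le_iInf fun hrep => ?_
      have hρpos : 0 < ρ := by
        obtain ⟨w, hw⟩ := htn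
        rw [hrep] at hw
        exact zero_le.trans_lt (EMetric.mem_ball.1 hw)
      have hc : c ∈ t n := by rw [hrep]; exact EMetric.mem_ball_self hρpos
      have hdist : dist c y < δ := by
        have h1 : edist c y < ENNReal.ofReal δ :=
          lt_of_le_of_lt ((EMetric.edist_le_diam_of_mem hc hyt).trans (hdiam.trans hε)) hε₀δ
        exact edist_lt_ofReal.1 h1
      exact ENNReal.rpow_le_rpow_of_exponent_ge (le_trans (hdiam.trans hε) hε₀1)
        (hQd c y hyB hdist)
    · simp only [t', if_neg hmeet]
      simp
  have hH : μH[d] B = OuterMeasure.mkMetric' (fun s => EMetric.diam s ^ d) B :=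
    (congrFun (OuterMeasure.coe_mkMetric fun t => t ^ d) B).symm
  rw [hH, aux_mkMetric'_apply, aux_mkMetric'_apply]
  refine iSup₂_le fun ρ hρ => ?_
  calc OuterMeasure.mkMetric'.pre (fun s => EMetric.diam s ^ d) ρ B
      ≤ OuterMeasure.mkMetric'.pre (fun s => EMetric.diam s ^ d) (min ρ ε₀) B :=
        OuterMeasure.mkMetric'.mono_pre _ (min_le_left _ _) B
    _ ≤ OuterMeasure.mkMetric'.pre (gaugeQ Q) (min ρ ε₀) B := key _ (min_le_right _ _)
    _ ≤ _ := le_iSup₂_of_le (min ρ ε₀) (lt_min hρ hε₀0) le_rfl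

/-- Lower bound: if `Q ≥ m > d` on `B` and `μH[d] B = 0`, then `λ B = 0`. -/
lemma lambdaQc_eq_zero (Q : X → ℝ) {B : Set X} (hB : MeasurableSet B) (hne : B.Nonempty)
    {d m : ℝ} (hd : 0 < d) (hdm : d < m) (hm : ∀ y ∈ B, m ≤ Q y)
    (h0 : μH[d] B = 0) : lambdaQc X Q B = 0 := by
  classical
  have hm0 : 0 < m := hd.trans hdm
  obtain ⟨y₀, hy₀⟩ := hne
  set C : ℝ≥0∞ := (1 - (2⁻¹ : ℝ≥0∞) ^ m)⁻¹ with hCdef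
  have hxlt : ((2⁻¹ : ℝ≥0∞)) ^ m < 1 :=
    ENNReal.rpow_lt_one (by simp [ENNReal.inv_lt_one, one_lt_two]) hm0
  have hCne : C ≠ ⊤ := ENNReal.inv_ne_top.2 (tsub_pos_of_lt hxlt).ne'
  have hC0 : C ≠ 0 :=
    ENNReal.inv_ne_zero.2 (tsub_le_self.trans_lt ENNReal.one_lt_top).ne
  have h8d0 : (8 : ℝ≥0∞) ^ d ≠ 0 := (ENNReal.rpow_pos (by norm_num) (by norm_num)).ne'
  have h8dt : (8 : ℝ≥0∞) ^ d ≠ ⊤ := ENNReal.rpow_ne_top_of_nonneg hd.le (by norm_num)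
  -- The key covering estimate.
  have claim : ∀ θ : ℝ≥0∞, 0 < θ → ∀ ε : ℝ≥0∞, 0 < ε → ε ≤ 1 →
      OuterMeasure.mkMetric'.pre (gaugeQ Q) ε B ≤ (8 : ℝ≥0∞) ^ d * θ + ε ^ m * C := by
    intro θ hθ ε hε0 hε1
    have hε8 : (0 : ℝ≥0∞) < ε / 8 := ENNReal.div_pos hε0.ne' (by norm_num)
    have h8ε : 8 * (ε / 8) = ε := ENNReal.mul_div_cancel' (by norm_num) (by norm_num)
    have hεself : ε / 8 ≤ ε := by
      rw [div_eq_mul_inv]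
      calc ε * 8⁻¹ ≤ ε * 1 := mul_le_mul_right (ENNReal.inv_le_one.2 (by norm_num)) ε
        _ = ε := mul_one ε
    -- find a cover with small Hausdorff sum
    have hpre0 : OuterMeasure.mkMetric'.pre (fun s => EMetric.diam s ^ d) (ε / 8) B < θ := by
      refine lt_of_le_of_lt ?_ hθ
      have h1 : OuterMeasure.mkMetric'.pre (fun s => EMetric.diam s ^ d) (ε / 8) B
          ≤ OuterMeasure.mkMetric' (fun s => EMetric.diam s ^ d) B := by
        rw [aux_mkMetric'_apply]
        exact le_iSup₂_of_le (ε / 8) hε8 le_rfl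
      have h2 : OuterMeasure.mkMetric' (fun s => EMetric.diam s ^ d) B = μH[d] B :=
        congrFun (OuterMeasure.coe_mkMetric fun t => t ^ d) B
      exact h1.trans_eq (h2.trans h0)
    rw [OuterMeasure.mkMetric'.pre, OuterMeasure.boundedBy_apply] at hpre0
    obtain ⟨t, ht2⟩ := iInf_lt_iff.1 hpre0
    obtain ⟨ht, hsum⟩ := iInf_lt_iff.1 ht2
    have hdiam : ∀ n, EMetric.diam (t n) ≤ ε / 8 := by
      intro n
      by_contra hcon
      push_neg at hcon
      obtain ⟨w, hw, -⟩ := EMetric.diam_pos_iff.1 (hε8.trans hcon)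
      have htop : (⨆ _ : (t n).Nonempty,
          extend (fun s (_ : EMetric.diam s ≤ ε / 8) => EMetric.diam s ^ d) (t n)) = ⊤ := by
        rw [iSup_pos ⟨w, hw⟩]
        simp [extend, hcon.not_ge]
      have : (∑' n, ⨆ _ : (t n).Nonempty,
          extend (fun s (_ : EMetric.diam s ≤ ε / 8) => EMetric.diam s ^ d) (t n)) = ⊤ :=
        ENNReal.tsum_eq_top_of_eq_top ⟨n, htop⟩
      exact not_top_lt (this.symm.le.trans_lt hsum)
    have hsumd : (∑' n, EMetric.diam (t n) ^ d) ≤ θ := by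
      refine le_trans (ENNReal.tsum_le_tsum fun n => ?_) hsum.le
      rcases eq_empty_or_nonempty (t n) with he | hn
      · simp [he, EMetric.diam_empty, ENNReal.zero_rpow_of_pos hd]; exact Or.inl ⟨EMetric.diam_empty, hd⟩
      · rw [iSup_pos hn]
        simp [extend, hdiam n]
    -- build the enlarged balls
    set εs : ℕ → ℝ≥0∞ := fun n => ε / 8 * 2⁻¹ ^ n with hεsdef
    have hεspos : ∀ n, 0 < εs n :=
      fun n => ENNReal.mul_pos hε8.ne' (pow_ne_zero n (by norm_num))
    have hεsle : ∀ n, εs n ≤ ε / 8 := fun n => by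
      calc εs n ≤ ε / 8 * 1 :=
            mul_le_mul_right (pow_le_one₀ zero_le (ENNReal.inv_le_one.2 (by norm_num))) _
        _ = ε / 8 := mul_one _
    set y : ℕ → X := fun n => if h : (t n ∩ B).Nonempty then h.choose else y₀ with hydef
    have hyB : ∀ n, y n ∈ B := by
      intro n
      by_cases h : (t n ∩ B).Nonempty
      · simp only [y, dif_pos h]; exact h.choose_spec.2
      · simp only [y, dif_neg h]; exact hy₀
    have hyt : ∀ n, (t n ∩ B).Nonempty → y n ∈ t n := by
      intro n h
      simp only [y, dif_pos h]; exact h.choose_spec.1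
    set U : ℕ → Set X := fun n => EMetric.ball (y n) (2 * EMetric.diam (t n) + εs n) with hUdef
    have hdiamt_ne_top : ∀ n, EMetric.diam (t n) ≠ ⊤ :=
      fun n => ((hdiam n).trans_lt (lt_of_le_of_lt hεself (hε1.trans_lt (by norm_num)))).ne
    have hcovU : B ⊆ ⋃ n, U n := by
      intro z hz
      rcases mem_iUnion.1 (ht hz) with ⟨n, hn⟩
      have hmeet : (t n ∩ B).Nonempty := ⟨z, hn, hz⟩
      refine mem_iUnion.2 ⟨n, ?_⟩
      refine EMetric.mem_ball.2 ?_
      calc edist z (y n) ≤ EMetric.diam (t n) :=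
            EMetric.edist_le_diam_of_mem hn (hyt n hmeet)
        _ < EMetric.diam (t n) + εs n :=
            ENNReal.lt_add_right (hdiamt_ne_top n) (hεspos n).ne'
        _ ≤ 2 * EMetric.diam (t n) + εs n :=
            add_le_add_left (le_mul_of_one_le_left zero_le one_le_two) _
    have hdiamU : ∀ n, EMetric.diam (U n) ≤ 4 * EMetric.diam (t n) + 2 * εs n := by
      intro n
      calc EMetric.diam (U n) ≤ 2 * (2 * EMetric.diam (t n) + εs n) := EMetric.diam_ball
        _ = 4 * EMetric.diam (t n) + 2 * εs n := by ring
    have hdiamUε : ∀ n, EMetric.diam (U n) ≤ ε := by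
      intro n
      calc EMetric.diam (U n) ≤ 4 * EMetric.diam (t n) + 2 * εs n := hdiamU n
        _ ≤ 4 * (ε / 8) + 2 * (ε / 8) :=
            add_le_add (mul_le_mul_right (hdiam n) _) (mul_le_mul_right (hεsle n) _)
        _ = 6 * (ε / 8) := by ring
        _ ≤ 8 * (ε / 8) := mul_le_mul_left (by norm_num) _
        _ = ε := h8ε
    -- gauge estimate for each ball
    have hgauge : ∀ n, gaugeQ Q (U n)
        ≤ (8 : ℝ≥0∞) ^ d * EMetric.diam (t n) ^ d + ε ^ m * (((2⁻¹ : ℝ≥0∞) ^ m) ^ n) := by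
      intro n
      have hQy : m ≤ Q (y n) := hm (y n) (hyB n)
      have hQy0 : 0 ≤ Q (y n) := hm0.le.trans hQy
      have hq1 : gaugeQ Q (U n) ≤ EMetric.diam (U n) ^ Q (y n) :=
        iInf_le_of_le (y n) (iInf_le_of_le (2 * EMetric.diam (t n) + εs n)
          (iInf_le_of_le rfl le_rfl))
      have h8diam : 8 * EMetric.diam (t n) ≤ 1 := by
        calc 8 * EMetric.diam (t n) ≤ 8 * (ε / 8) := mul_le_mul_right (hdiam n) _
          _ = ε := h8ε
          _ ≤ 1 := hε1
      have h4eps : 4 * εs n ≤ ε * 2⁻¹ ^ n := by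
        rw [hεsdef]
        calc 4 * (ε / 8 * 2⁻¹ ^ n) = 4 * (ε / 8) * 2⁻¹ ^ n := by ring
          _ ≤ 8 * (ε / 8) * 2⁻¹ ^ n :=
              mul_le_mul_left (mul_le_mul_left (by norm_num) _) _
          _ = ε * 2⁻¹ ^ n := by rw [h8ε]
      have h4eps1 : 4 * εs n ≤ 1 := by
        refine h4eps.trans (le_trans ?_ hε1)
        calc ε * 2⁻¹ ^ n ≤ ε * 1 :=
              mul_le_mul_right (pow_le_one₀ zero_le (ENNReal.inv_le_one.2 (by norm_num))) _
          _ = ε := mul_one ε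
      have hterm1 : (2 * (4 * EMetric.diam (t n))) ^ Q (y n)
          ≤ (8 : ℝ≥0∞) ^ d * EMetric.diam (t n) ^ d := by
        have he : 2 * (4 * EMetric.diam (t n)) = 8 * EMetric.diam (t n) := by ring
        rw [he]
        calc (8 * EMetric.diam (t n)) ^ Q (y n) ≤ (8 * EMetric.diam (t n)) ^ d :=
              ENNReal.rpow_le_rpow_of_exponent_ge h8diam (hdm.le.trans hQy)
          _ = (8 : ℝ≥0∞) ^ d * EMetric.diam (t n) ^ d :=
              ENNReal.mul_rpow_of_nonneg _ _ hd.le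
      have hterm2 : (2 * (2 * εs n)) ^ Q (y n) ≤ ε ^ m * (((2⁻¹ : ℝ≥0∞) ^ m) ^ n) := by
        have he : 2 * (2 * εs n) = 4 * εs n := by ring
        rw [he]
        calc (4 * εs n) ^ Q (y n) ≤ (4 * εs n) ^ m :=
              ENNReal.rpow_le_rpow_of_exponent_ge h4eps1 hQy
          _ ≤ (ε * 2⁻¹ ^ n) ^ m := ENNReal.rpow_le_rpow h4eps hm0.le
          _ = ε ^ m * ((2⁻¹ : ℝ≥0∞) ^ n) ^ m := ENNReal.mul_rpow_of_nonneg _ _ hm0.le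
          _ = ε ^ m * (((2⁻¹ : ℝ≥0∞) ^ m) ^ n) := by
              congr 1
              rw [← ENNReal.rpow_natCast (2⁻¹ : ℝ≥0∞) n, ← ENNReal.rpow_mul,
                mul_comm (n : ℝ) m, ENNReal.rpow_mul, ENNReal.rpow_natCast]
      calc gaugeQ Q (U n) ≤ EMetric.diam (U n) ^ Q (y n) := hq1
        _ ≤ (4 * EMetric.diam (t n) + 2 * εs n) ^ Q (y n) :=
            ENNReal.rpow_le_rpow (hdiamU n) hQy0
        _ ≤ (2 * (4 * EMetric.diam (t n))) ^ Q (y n) + (2 * (2 * εs n)) ^ Q (y n) :=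
            aux_add_rpow_le hQy0
        _ ≤ _ := add_le_add hterm1 hterm2
    -- put everything together
    calc OuterMeasure.mkMetric'.pre (gaugeQ Q) ε B
        ≤ OuterMeasure.mkMetric'.pre (gaugeQ Q) ε (⋃ n, U n) := measure_mono hcovU
      _ ≤ ∑' n, OuterMeasure.mkMetric'.pre (gaugeQ Q) ε (U n) := measure_iUnion_le _
      _ ≤ ∑' n, gaugeQ Q (U n) :=
          ENNReal.tsum_le_tsum fun n => OuterMeasure.mkMetric'.pre_le (hdiamUε n)
      _ ≤ ∑' n, ((8 : ℝ≥0∞) ^ d * EMetric.diam (t n) ^ d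
            + ε ^ m * (((2⁻¹ : ℝ≥0∞) ^ m) ^ n)) := ENNReal.tsum_le_tsum hgauge
      _ = (8 : ℝ≥0∞) ^ d * (∑' n, EMetric.diam (t n) ^ d)
            + ε ^ m * (∑' n, ((2⁻¹ : ℝ≥0∞) ^ m) ^ n) := by
          rw [ENNReal.tsum_add, ENNReal.tsum_mul_left, ENNReal.tsum_mul_left]
      _ ≤ (8 : ℝ≥0∞) ^ d * θ + ε ^ m * C := by
          rw [ENNReal.tsum_geometric]
          exact add_le_add_left (mul_le_mul_right hsumd _) _
  -- conclude that the measure is zero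
  rw [lambdaQc_apply_eq_outer Q hB]
  refine le_antisymm ?_ zero_le
  refine ENNReal.le_of_forall_pos_le_add fun κ hκ _ => ?_
  rw [zero_add]
  have hκ0 : ((κ : ℝ≥0∞) / 2) ≠ 0 := by
    simp [ENNReal.div_eq_zero_iff]
    exact_mod_cast hκ.ne'
  have hκt : ((κ : ℝ≥0∞) / 2) ≠ ⊤ := by
    simp [ENNReal.div_eq_top]
  set θ : ℝ≥0∞ := (κ / 2) * ((8 : ℝ≥0∞) ^ d)⁻¹ with hθdef
  have hθ0 : 0 < θ :=
    ENNReal.mul_pos hκ0 (ENNReal.inv_ne_zero.2 h8dt)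
  set K : ℝ≥0∞ := (κ / 2) * C⁻¹ with hKdef
  have hK0 : K ≠ 0 := mul_ne_zero hκ0 (ENNReal.inv_ne_zero.2 hCne)
  have hKt : K ≠ ⊤ := ENNReal.mul_ne_top hκt (ENNReal.inv_ne_top.2 hC0)
  set ε₁ : ℝ≥0∞ := min 1 (K ^ (1 / m)) with hε₁def
  have hε₁0 : 0 < ε₁ := lt_min zero_lt_one (ENNReal.rpow_pos (pos_iff_ne_zero.2 hK0) hKt)
  have hmain : ∀ ρ : ℝ≥0∞, 0 < ρ → OuterMeasure.mkMetric'.pre (gaugeQ Q) ρ B ≤ κ := by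
    intro ρ hρ
    set ε : ℝ≥0∞ := min ρ ε₁ with hεdef
    have hε0 : 0 < ε := lt_min hρ hε₁0
    have hε1 : ε ≤ 1 := (min_le_right _ _).trans (min_le_left _ _)
    have h1 := claim θ hθ0 ε hε0 hε1
    have h2 : OuterMeasure.mkMetric'.pre (gaugeQ Q) ρ B
        ≤ OuterMeasure.mkMetric'.pre (gaugeQ Q) ε B :=
      OuterMeasure.mkMetric'.mono_pre _ (min_le_left _ _) B
    have h3 : (8 : ℝ≥0∞) ^ d * θ = κ / 2 := by
      rw [hθdef, ← mul_assoc, mul_comm ((8 : ℝ≥0∞) ^ d) (κ / 2), mul_assoc,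
        ENNReal.mul_inv_cancel h8d0 h8dt, mul_one]
    have h4 : ε ^ m * C ≤ κ / 2 := by
      have hεK : ε ^ m ≤ K := by
        calc ε ^ m ≤ (K ^ (1 / m)) ^ m :=
              ENNReal.rpow_le_rpow ((min_le_right _ _).trans (min_le_right _ _)) hm0.le
          _ = K := by
              rw [← ENNReal.rpow_mul, one_div, inv_mul_cancel₀ hm0.ne', ENNReal.rpow_one]
      calc ε ^ m * C ≤ K * C := mul_le_mul_left hεK C
        _ = (κ / 2) * (C⁻¹ * C) := by rw [hKdef, mul_assoc]
        _ = κ / 2 := by rw [ENNReal.inv_mul_cancel hC0 hCne, mul_one]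
    calc OuterMeasure.mkMetric'.pre (gaugeQ Q) ρ B
        ≤ (8 : ℝ≥0∞) ^ d * θ + ε ^ m * C := h2.trans h1
      _ ≤ κ / 2 + κ / 2 := by rw [h3]; exact add_le_add_right h4 _
      _ = κ := ENNReal.add_halves _
  rw [aux_mkMetric'_apply]
  exact iSup₂_le fun ρ hρ => hmain ρ hρ

end Aux

/-- If `X` is compact, `Q : X → [0,∞)` is continuous and `X` is `Q`-amenable, then every
nonempty open ball `B` satisfies `inf_{y ∈ B} Q(y) ≤ dim_H B ≤ sup_{y ∈ B} Q(y)`. -/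
theorem dimH_ball_between_inf_sup {X : Type*} [MetricSpace X] [MeasurableSpace X]
    [BorelSpace X] [CompactSpace X] (Q : X → ℝ) (hQ0 : ∀ x, 0 ≤ Q x)
    (hQcont : Continuous Q)
    (ham : ∀ (x : X) (r : ℝ≥0∞), 0 < r → r < ⊤ → (EMetric.ball x r).Nonempty →
      0 < lambdaQc X Q (EMetric.ball x r) ∧ lambdaQc X Q (EMetric.ball x r) < ⊤) :
    ∀ (x : X) (r : ℝ≥0∞), (EMetric.ball x r).Nonempty →
      ENNReal.ofReal (⨅ y : ↥(EMetric.ball x r), Q y) ≤ dimH (EMetric.ball x r) ∧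
      dimH (EMetric.ball x r) ≤ ENNReal.ofReal (⨆ y : ↥(EMetric.ball x r), Q y) := by
  intro x r hne
  -- reduce to a finite positive radius
  obtain ⟨R, hR0, hRtop, hBR⟩ : ∃ R : ℝ≥0∞, 0 < R ∧ R < ⊤ ∧
      EMetric.ball x r = EMetric.ball x R := by
    have hdiam : EMetric.diam (univ : Set X) ≠ ⊤ :=
      (isCompact_univ.isBounded).ediam_ne_top
    refine ⟨min r (EMetric.diam (univ : Set X) + 1), ?_, ?_, ?_⟩
    · obtain ⟨y, hy⟩ := hne
      exact lt_min (zero_le.trans_lt hy) (by simp)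
    · exact (min_le_right _ _).trans_lt (lt_top_iff_ne_top.2 (by
        simp [ENNReal.add_eq_top, hdiam]))
    · apply Subset.antisymm
      · intro y hy
        replace hy : edist y x < r := hy
        show edist y x < min r (EMetric.diam (univ : Set X) + 1)
        refine lt_min hy ?_
        calc edist y x ≤ EMetric.diam (univ : Set X) :=
              EMetric.edist_le_diam_of_mem (mem_univ _) (mem_univ _)
          _ < _ := ENNReal.lt_add_right hdiam one_ne_zero
      · exact EMetric.ball_subset_ball (min_le_left _ _)
  rw [hBR] at hne ⊢
  set B := EMetric.ball x R with hBdef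
  have hBmeas : MeasurableSet B := EMetric.isOpen_ball.measurableSet
  obtain ⟨hlam0, hlamtop⟩ := ham x R hR0 hRtop hne
  haveI : Nonempty B := hne.to_subtype
  obtain ⟨y₀, hy₀⟩ := id hne
  -- boundedness facts about Q
  obtain ⟨z, -, hz⟩ := isCompact_univ.exists_isMaxOn ⟨x, mem_univ x⟩ hQcont.continuousOn
  have hbddA : BddAbove (range fun y : B => Q y) :=
    ⟨Q z, by rintro _ ⟨y, rfl⟩; exact hz (mem_univ _)⟩
  have hbddB : BddBelow (range fun y : B => Q y) := ⟨0, by rintro _ ⟨y, rfl⟩; exact hQ0 y⟩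
  set mI : ℝ := ⨅ y : B, Q y with hmIdef
  set M : ℝ := ⨆ y : B, Q y with hMdef
  have hmI_le : ∀ y ∈ B, mI ≤ Q y := fun y hy => ciInf_le hbddB ⟨y, hy⟩
  have hle_M : ∀ y ∈ B, Q y ≤ M := fun y hy => le_ciSup hbddA ⟨y, hy⟩
  have hM0 : 0 ≤ M := (hQ0 y₀).trans (hle_M y₀ hy₀)
  constructor
  · -- lower bound
    refine ENNReal.le_of_forall_nnreal_lt fun ρ hρ => ?_
    rcases eq_or_lt_of_le (zero_le (a := ρ)) with hρ0 | hρ0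
    · simp [← hρ0]
    have hdm : (ρ : ℝ) < mI := by
      rw [← ENNReal.ofReal_coe_nnreal] at hρ
      exact (ENNReal.ofReal_lt_ofReal_iff_of_nonneg ρ.2).1 hρ
    refine le_dimH_of_hausdorffMeasure_ne_zero fun h0 => ?_
    exact hlam0.ne' (lambdaQc_eq_zero Q hBmeas hne hρ0 hdm hmI_le h0)
  · -- upper bound
    refine ENNReal.le_of_forall_pos_le_add fun η hη _ => ?_
    set d : ℝ := M + η with hddef
    have hd0 : 0 ≤ d := by positivity
    have hend : ENNReal.ofReal M + (η : ℝ≥0∞) = ENNReal.ofReal d := by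
      rw [hddef]
      exact ((ENNReal.ofReal_add hM0 η.2).trans
        (by simp [ENNReal.ofReal_coe_nnreal])).symm
    rw [hend]
    -- uniform continuity of Q
    obtain ⟨δ, hδ0, hδ⟩ := Metric.uniformContinuous_iff.1
      (CompactSpace.uniformContinuous_of_continuous hQcont) (η : ℝ) (by exact_mod_cast hη)
    have hQd : ∀ c y : X, y ∈ B → dist c y < δ → Q c ≤ d := by
      intro c y hy hcy
      have h1 : |Q c - Q y| < η := by
        have := hδ hcy
        rwa [Real.dist_eq] at this
      have h2 : Q c < Q y + η := by
        have := (abs_sub_lt_iff.1 h1).1; linarith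
      exact (h2.le.trans (add_le_add_left (hle_M y hy) _))
    have hmulam : μH[d] B ≤ lambdaQc X Q B := hausdorff_le_lambdaQc Q hBmeas hδ0 hQd
    have hne_top : μH[d] B ≠ ⊤ := (hmulam.trans_lt hlamtop).ne
    have := dimH_le_of_hausdorffMeasure_ne_top (d := d.toNNReal)
      (s := B) (by rwa [Real.coe_toNNReal d hd0])
    rwa [show ((d.toNNReal : ℝ≥0∞)) = ENNReal.ofReal d from rfl] at this
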